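/- For a random variable ε = tanh(y/σ²) with y ~ N(1, σ²), as σ → ∞ both E[ε] and E[ε²] are asymptotic to σ^{−2}: E[ε] ~ σ^{−2} and E[ε²] ~ σ^{−2}. -/

import Mathlib

open MeasureTheory ProbabilityTheory Real Filter Topology
open Set



lemma tanh_hasDerivAt (x : ℝ) : HasDerivAt Real.tanh (1 - Real.tanh x ^ 2) x := by
  have h := (Real.hasDerivAt_sinh x).div (Real.hasDerivAt_cosh x) (Real.cosh_pos x).ne'
  have hfun : Real.tanh = fun y => Real.sinh y / Real.cosh y :=
    funext fun y => Real.tanh_eq_sinh_div_cosh y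
  rw [hfun]
  refine h.congr_deriv ?_
  have hc := (Real.cosh_pos x).ne'
  have hid := Real.cosh_sq_sub_sinh_sq x
  simp only
  field_simp

lemma aux_mono {f f' : ℝ → ℝ} (hf : ∀ x, HasDerivAt f (f' x) x)
    (h0 : ∀ x, 0 ≤ x → 0 ≤ f' x) {x : ℝ} (hx : 0 ≤ x) : f 0 ≤ f x := by
  have hmono : MonotoneOn f (Set.Ici 0) := by
    apply monotoneOn_of_deriv_nonneg (convex_Ici 0)
    · exact fun y _ => (hf y).continuousAt.continuousWithinAt
    · exact fun y _ => (hf y).differentiableAt.differentiableWithinAt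
    · intro y hy
      rw [interior_Ici] at hy
      rw [(hf y).deriv]
      exact h0 y hy.le
  exact hmono Set.self_mem_Ici hx hx

lemma my_tanh_nonneg {x : ℝ} (hx : 0 ≤ x) : 0 ≤ Real.tanh x := by
  rw [Real.tanh_eq_sinh_div_cosh]
  exact div_nonneg (by rwa [Real.sinh_nonneg_iff]) (Real.cosh_pos x).le

lemma my_tanh_le {x : ℝ} (hx : 0 ≤ x) : Real.tanh x ≤ x := by
  have h := aux_mono (f := fun y => y - Real.tanh y) (f' := fun y => Real.tanh y ^ 2)
    (fun y => by
      have := (hasDerivAt_id y).sub (tanh_hasDerivAt y)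
      exact this.congr_deriv (by ring))
    (fun y _ => sq_nonneg _) hx
  simp [Real.tanh_zero] at h
  linarith

lemma my_sub_tanh_le {x : ℝ} (hx : 0 ≤ x) : x - Real.tanh x ≤ x ^ 3 / 3 := by
  have h := aux_mono (f := fun y => y ^ 3 / 3 - y + Real.tanh y)
    (f' := fun y => y ^ 2 - Real.tanh y ^ 2)
    (fun y => by
      have := (((hasDerivAt_pow 3 y).div_const 3).sub (hasDerivAt_id y)).add (tanh_hasDerivAt y)
      exact this.congr_deriv (by ring))
    (fun y hy => by
      have h1 := my_tanh_nonneg hy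
      have h2 := my_tanh_le hy
      nlinarith) hx
  simp [Real.tanh_zero] at h
  linarith

lemma my_abs_tanh_sub (x : ℝ) : |Real.tanh x - x| ≤ |x| ^ 3 / 3 := by
  rcases le_total 0 x with h | h
  · rw [abs_of_nonneg h, abs_of_nonpos (by linarith [my_tanh_le h])]
    linarith [my_sub_tanh_le h]
  · have h' : 0 ≤ -x := by linarith
    have h1 := my_tanh_le h'
    have h2 := my_sub_tanh_le h'
    rw [Real.tanh_neg] at h1 h2
    rw [abs_of_nonpos h, abs_of_nonneg (by linarith : 0 ≤ Real.tanh x - x)]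
    nlinarith

lemma my_abs_tanh_le_abs (x : ℝ) : |Real.tanh x| ≤ |x| := by
  rcases le_total 0 x with h | h
  · rw [abs_of_nonneg h, abs_of_nonneg (my_tanh_nonneg h)]; exact my_tanh_le h
  · have h' : 0 ≤ -x := by linarith
    have h1 := my_tanh_le h'
    have h0 := my_tanh_nonneg h'
    rw [Real.tanh_neg] at h1 h0
    rw [abs_of_nonpos h, abs_of_nonpos (by linarith : Real.tanh x ≤ 0)]
    linarith

lemma my_abs_tanh_le_one (x : ℝ) : |Real.tanh x| ≤ 1 := by
  have h1 : Real.sinh x < Real.cosh x := Real.sinh_lt_cosh x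
  have h2 : Real.sinh (-x) < Real.cosh (-x) := Real.sinh_lt_cosh (-x)
  rw [Real.sinh_neg, Real.cosh_neg] at h2
  rw [Real.tanh_eq_sinh_div_cosh, abs_div, abs_of_pos (Real.cosh_pos x),
    div_le_one (Real.cosh_pos x)]
  rcases abs_cases (Real.sinh x) with ⟨he, _⟩ | ⟨he, _⟩ <;> rw [he] <;> linarith

lemma my_continuous_tanh : Continuous Real.tanh := by
  have hfun : Real.tanh = fun y => Real.sinh y / Real.cosh y :=
    funext fun y => Real.tanh_eq_sinh_div_cosh y
  rw [hfun]
  exact Real.continuous_sinh.div Real.continuous_cosh fun x => (Real.cosh_pos x).ne'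


lemma pdf_eq (x : ℝ) :
    gaussianPDFReal 0 1 x = (Real.sqrt (2 * π))⁻¹ * Real.exp (-(1/2) * x ^ 2) := by
  rw [gaussianPDFReal]
  simp only [NNReal.coe_one, mul_one, sub_zero]
  rw [show -x ^ 2 / 2 = -(1/2) * x ^ 2 by ring]

lemma gauss_eq : gaussianReal 0 1
    = volume.withDensity (fun x => ((gaussianPDFReal 0 1 x).toNNReal : ENNReal)) := by
  rw [gaussianReal_of_var_ne_zero _ one_ne_zero]
  rfl

lemma meas_pdf : Measurable (fun x => (gaussianPDFReal 0 1 x).toNNReal) :=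
  (measurable_gaussianPDFReal 0 1).real_toNNReal

lemma integral_gauss01 (f : ℝ → ℝ) :
    ∫ x, f x ∂(gaussianReal 0 1) = ∫ x, gaussianPDFReal 0 1 x * f x := by
  rw [gauss_eq, integral_withDensity_eq_integral_smul meas_pdf]
  congr 1
  funext x
  simp [NNReal.smul_def, Real.coe_toNNReal _ (gaussianPDFReal_nonneg 0 1 x)]

lemma integrable_abs_pow (n : ℕ) :
    Integrable (fun x : ℝ => |x| ^ n) (gaussianReal 0 1) := by
  rw [gauss_eq, integrable_withDensity_iff_integrable_smul meas_pdf]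
  have key : Integrable (fun x : ℝ => |x| ^ n * Real.exp (-(1/2) * x ^ 2)) volume := by
    have h := (integrable_rpow_mul_exp_neg_mul_sq (by norm_num : (0:ℝ) < 1/2)
      (s := (n : ℝ)) (by exact_mod_cast neg_one_lt_zero.trans_le (Nat.cast_nonneg n))).abs
    refine h.congr (ae_of_all _ fun x => ?_)
    dsimp only
    rw [Real.rpow_natCast, abs_mul, abs_pow, Real.abs_exp]
  refine ((key.const_mul ((Real.sqrt (2 * π))⁻¹)).congr (ae_of_all _ fun x => ?_))
  dsimp only
  rw [NNReal.smul_def, Real.coe_toNNReal _ (gaussianPDFReal_nonneg 0 1 x), smul_eq_mul, pdf_eq]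
  ring

lemma gauss_map_neg : (gaussianReal 0 1).map (fun x : ℝ => -x) = gaussianReal 0 1 := by
  have h := gaussianReal_map_const_mul (μ := 0) (v := 1) (-1)
  have he : (fun x : ℝ => -x) = fun x : ℝ => (-1) * x := by funext x; ring
  have hv : (⟨(-1:ℝ)^2, sq_nonneg _⟩ : NNReal) * 1 = 1 := by ext; norm_num
  rw [he]
  rw [h, mul_zero]; exact congrArg (gaussianReal 0) hv

lemma integral_id_gauss : ∫ x, x ∂(gaussianReal 0 1) = 0 := by
  have h := integral_map (μ := gaussianReal 0 1) (φ := fun x : ℝ => -x)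
    measurable_neg.aemeasurable (f := fun x : ℝ => x) aestronglyMeasurable_id
  rw [gauss_map_neg] at h
  have h2 : ∫ x : ℝ, -x ∂(gaussianReal 0 1) = - ∫ x : ℝ, x ∂(gaussianReal 0 1) :=
    integral_neg _
  linarith [h.trans h2]

lemma integral_sq_exp : ∫ x : ℝ, x ^ 2 * Real.exp (-(1/2) * x ^ 2) = Real.sqrt (2 * π) := by
  have h1 : ∫ x : ℝ, x ^ 2 * Real.exp (-(1/2) * x ^ 2)
      = 2 * ∫ x in Ioi (0:ℝ), x ^ 2 * Real.exp (-(1/2) * x ^ 2) := by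
    rw [← integral_comp_abs (f := fun x => x ^ 2 * Real.exp (-(1/2) * x ^ 2))]
    congr 1
    funext x
    simp [sq_abs]
  have h2 : ∫ x in Ioi (0:ℝ), x ^ 2 * Real.exp (-(1/2) * x ^ 2)
      = ∫ x in Ioi (0:ℝ), x ^ (2:ℝ) * Real.exp (-(1/2) * x ^ (2:ℝ)) := by
    refine setIntegral_congr_fun measurableSet_Ioi fun x hx => ?_
    rw [show (2:ℝ) = ((2:ℕ):ℝ) by norm_num, Real.rpow_natCast]
  have h3 := integral_rpow_mul_exp_neg_mul_rpow (p := 2) (q := 2) (b := 1/2)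
    two_pos (by norm_num) (by norm_num)
  have hg : Real.Gamma (((2:ℝ) + 1) / 2) = Real.sqrt π / 2 := by
    rw [show ((2:ℝ) + 1) / 2 = 1/2 + 1 by norm_num,
      Real.Gamma_add_one (by norm_num), Real.Gamma_one_half_eq]
    ring
  have hp : ((1:ℝ)/2) ^ (-((2:ℝ) + 1) / 2) = 2 * Real.sqrt 2 := by
    rw [show ((1:ℝ)/2) = 2⁻¹ by norm_num,
      Real.inv_rpow (by norm_num : (0:ℝ) ≤ 2), ← Real.rpow_neg (by norm_num : (0:ℝ) ≤ 2)]
    rw [show -(-((2:ℝ) + 1) / 2) = 1 + 1/2 by norm_num,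
      Real.rpow_add (by norm_num : (0:ℝ) < 2), Real.rpow_one, ← Real.sqrt_eq_rpow]
  rw [h1, h2, h3, hg, hp]
  rw [show (2:ℝ) * (2 * Real.sqrt 2 * (1/2) * (Real.sqrt π / 2)) = Real.sqrt 2 * Real.sqrt π
    by ring, ← Real.sqrt_mul (by norm_num : (0:ℝ) ≤ 2)]

lemma integral_sq_gauss : ∫ x, x ^ 2 ∂(gaussianReal 0 1) = 1 := by
  rw [integral_gauss01]
  have heq : (fun x : ℝ => gaussianPDFReal 0 1 x * x ^ 2)
      = fun x => (Real.sqrt (2 * π))⁻¹ * (x ^ 2 * Real.exp (-(1/2) * x ^ 2)) := by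
    funext x
    rw [pdf_eq]
    ring
  rw [heq, integral_const_mul, integral_sq_exp,
    inv_mul_cancel₀ (Real.sqrt_pos.mpr (by positivity)).ne']

lemma gauss_map_affine (σ : ℝ) :
    (gaussianReal 0 1).map (fun z => σ * z + 1) = gaussianReal 1 ((σ ^ 2).toNNReal) := by
  have hv : (⟨σ ^ 2, sq_nonneg σ⟩ : NNReal) * 1 = (σ ^ 2).toNNReal := by
    ext
    simp [Real.coe_toNNReal _ (sq_nonneg σ)]
  have h1 : (gaussianReal 0 1).map (fun z => σ * z) = gaussianReal 0 ((σ ^ 2).toNNReal) := by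
    have h := gaussianReal_map_const_mul (μ := 0) (v := 1) σ
    rw [mul_zero] at h
    rw [← hv]; exact h
  have h2 : (fun z : ℝ => σ * z + 1) = (fun y => y + 1) ∘ (fun z => σ * z) := rfl
  rw [h2, ← Measure.map_map (measurable_add_const 1) (measurable_const_mul σ), h1,
    gaussianReal_map_add_const 1, zero_add]

lemma integral_transfer (σ : ℝ) (f : ℝ → ℝ) (hf : Continuous f) :
    ∫ y, f y ∂(gaussianReal 1 ((σ ^ 2).toNNReal))
      = ∫ z, f (σ * z + 1) ∂(gaussianReal 0 1) := by
  rw [← gauss_map_affine σ,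
    integral_map ((measurable_const_mul σ).add_const 1).aemeasurable hf.aestronglyMeasurable]


section helpers

lemma hx_le {σ z : ℝ} (hσ : 1 ≤ σ) : |(σ*z+1)/σ^2| * σ ≤ 1 + |z| := by
  have hσ0 : (0:ℝ) < σ := lt_of_lt_of_le one_pos hσ
  have habs : |σ*z+1| ≤ σ*|z|+1 := by
    calc |σ*z+1| ≤ |σ*z| + |(1:ℝ)| := abs_add_le _ _
    _ = σ*|z| + 1 := by rw [abs_mul, abs_of_pos hσ0, abs_one]
  have hxabs : |(σ*z+1)/σ^2| = |σ*z+1|/σ^2 := by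
    rw [abs_div, abs_of_pos (pow_pos hσ0 2)]
  rw [hxabs, div_mul_eq_mul_div, div_le_iff₀ (pow_pos hσ0 2)]
  nlinarith [habs, hσ, abs_nonneg z, hσ0, mul_le_mul_of_nonneg_right habs hσ0.le]

lemma hE {σ z : ℝ} (hσ : 1 ≤ σ) :
    σ^2 * |Real.tanh ((σ*z+1)/σ^2) - (σ*z+1)/σ^2| ≤ (1+|z|)^3/(3*σ) := by
  have hσ0 : (0:ℝ) < σ := lt_of_lt_of_le one_pos hσ
  set x := (σ*z+1)/σ^2 with hxdef
  have h1 : |Real.tanh x - x| ≤ |x|^3/3 := my_abs_tanh_sub x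
  have h2 : |x| * σ ≤ 1 + |z| := hx_le hσ
  have h3 : (|x| * σ)^3 ≤ (1+|z|)^3 := pow_le_pow_left₀ (by positivity) h2 3
  rw [le_div_iff₀ (by positivity : (0:ℝ) < 3*σ)]
  have h4 := mul_le_mul_of_nonneg_left h1 (le_of_lt (pow_pos hσ0 3))
  nlinarith [h3, h4, abs_nonneg (Real.tanh x - x), pow_pos hσ0 3]

lemma hB2 {σ z : ℝ} (hσ : 1 ≤ σ) :
    σ^2 * Real.tanh ((σ*z+1)/σ^2)^2 ≤ (1+|z|)^2 := by
  have hσ0 : (0:ℝ) < σ := lt_of_lt_of_le one_pos hσ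
  set x := (σ*z+1)/σ^2 with hxdef
  have ht : Real.tanh x^2 ≤ x^2 := by
    nlinarith [my_abs_tanh_le_abs x, abs_nonneg (Real.tanh x), abs_nonneg x,
      sq_abs x, sq_abs (Real.tanh x)]
  have h2 : |x| * σ ≤ 1 + |z| := hx_le hσ
  have h3 : (|x| * σ)^2 ≤ (1+|z|)^2 := pow_le_pow_left₀ (by positivity) h2 2
  calc σ^2 * Real.tanh x^2 ≤ σ^2 * x^2 := mul_le_mul_of_nonneg_left ht (sq_nonneg σ)
    _ = (|x| * σ)^2 := by rw [mul_pow, sq_abs]; ring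
    _ ≤ (1+|z|)^2 := h3

lemma cont_inner (σ : ℝ) : Continuous (fun z : ℝ => (σ*z+1)/σ^2) :=
  ((continuous_const.mul continuous_id).add continuous_const).div_const _

lemma hlim1 (z : ℝ) : Tendsto (fun σ : ℝ => σ^2 * Real.tanh ((σ*z+1)/σ^2) - σ*z)
    atTop (𝓝 1) := by
  have herr : Tendsto (fun σ : ℝ =>
      σ^2 * (Real.tanh ((σ*z+1)/σ^2) - (σ*z+1)/σ^2)) atTop (𝓝 0) := by
    apply squeeze_zero_norm' (a := fun σ => ((1+|z|)^3/3)/σ)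
    · filter_upwards [eventually_ge_atTop (1:ℝ)] with σ hσ
      have h := hE (z := z) hσ
      rw [Real.norm_eq_abs, abs_mul, abs_of_nonneg (sq_nonneg σ), div_div]
      exact h
    · exact tendsto_const_nhds.div_atTop tendsto_id
  have hmain : Tendsto (fun σ : ℝ =>
      1 + σ^2 * (Real.tanh ((σ*z+1)/σ^2) - (σ*z+1)/σ^2)) atTop (𝓝 1) := by
    have h := (tendsto_const_nhds (x := (1:ℝ)) (f := atTop)).add herr
    simpa using h
  apply Filter.Tendsto.congr' _ hmain
  filter_upwards [eventually_ge_atTop (1:ℝ)] with σ hσ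
  have hσ0 : σ ≠ 0 := (lt_of_lt_of_le one_pos hσ).ne'
  field_simp
  ring

lemma hlim2 (z : ℝ) : Tendsto (fun σ : ℝ => σ^2 * Real.tanh ((σ*z+1)/σ^2)^2)
    atTop (𝓝 (z^2)) := by
  have hs : Tendsto (fun σ : ℝ => σ * Real.tanh ((σ*z+1)/σ^2)) atTop (𝓝 z) := by
    have herr : Tendsto (fun σ : ℝ =>
        σ * (Real.tanh ((σ*z+1)/σ^2) - (σ*z+1)/σ^2)) atTop (𝓝 0) := by
      apply squeeze_zero_norm' (a := fun σ => ((1+|z|)^3/3)/σ)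
      · filter_upwards [eventually_ge_atTop (1:ℝ)] with σ hσ
        have hσ0 : (0:ℝ) < σ := lt_of_lt_of_le one_pos hσ
        have h := hE (z := z) hσ
        rw [Real.norm_eq_abs, abs_mul, abs_of_pos hσ0, div_div]
        refine le_trans ?_ h
        nlinarith [abs_nonneg (Real.tanh ((σ*z+1)/σ^2) - (σ*z+1)/σ^2), hσ, hσ0,
          mul_nonneg (mul_nonneg (sub_nonneg.2 hσ) hσ0.le)
            (abs_nonneg (Real.tanh ((σ*z+1)/σ^2) - (σ*z+1)/σ^2))]
      · exact tendsto_const_nhds.div_atTop tendsto_id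
    have hlin : Tendsto (fun σ : ℝ => z + 1/σ) atTop (𝓝 z) := by
      have h := (tendsto_const_nhds (x := z) (f := atTop)).add
        ((tendsto_const_nhds (x := (1:ℝ))).div_atTop tendsto_id)
      simpa using h
    have hmain := hlin.add herr
    rw [add_zero] at hmain
    apply Filter.Tendsto.congr' _ hmain
    filter_upwards [eventually_ge_atTop (1:ℝ)] with σ hσ
    have hσ0 : σ ≠ 0 := (lt_of_lt_of_le one_pos hσ).ne'
    field_simp
    ring
  have h := hs.mul hs
  rw [show z^2 = z*z by ring]
  exact h.congr fun σ => by ring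

lemma key1 : Tendsto (fun σ : ℝ =>
    ∫ z, (σ^2 * Real.tanh ((σ*z+1)/σ^2) - σ*z) ∂(gaussianReal 0 1)) atTop (𝓝 1) := by
  have int_one : ∫ _z : ℝ, (1:ℝ) ∂(gaussianReal 0 1) = 1 := by simp
  have hmeas : ∀ᶠ σ : ℝ in atTop, AEStronglyMeasurable
      (fun z : ℝ => σ^2 * Real.tanh ((σ*z+1)/σ^2) - σ*z) (gaussianReal 0 1) :=
    Eventually.of_forall fun σ =>
      ((continuous_const.mul (my_continuous_tanh.comp (cont_inner σ))).sub
        (continuous_const.mul continuous_id)).aestronglyMeasurable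
  have hbnd : ∀ᶠ σ : ℝ in atTop, ∀ᵐ z ∂(gaussianReal 0 1),
      ‖σ^2 * Real.tanh ((σ*z+1)/σ^2) - σ*z‖ ≤ (1+|z|)^3/3 + 1 := by
    filter_upwards [eventually_ge_atTop (1:ℝ)] with σ hσ
    refine ae_of_all _ fun z => ?_
    have hσ0 : (0:ℝ) < σ := lt_of_lt_of_le one_pos hσ
    have hrw : σ^2 * Real.tanh ((σ*z+1)/σ^2) - σ*z
        = σ^2 * (Real.tanh ((σ*z+1)/σ^2) - (σ*z+1)/σ^2) + 1 := by
      field_simp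
      ring
    rw [hrw, Real.norm_eq_abs]
    have hdiv : (1+|z|)^3/(3*σ) ≤ (1+|z|)^3/3 := by
      rw [div_le_div_iff₀ (by positivity) (by norm_num)]
      nlinarith [pow_nonneg (by positivity : (0:ℝ) ≤ 1 + |z|) 3, hσ]
    calc |σ^2 * (Real.tanh ((σ*z+1)/σ^2) - (σ*z+1)/σ^2) + 1|
        ≤ |σ^2 * (Real.tanh ((σ*z+1)/σ^2) - (σ*z+1)/σ^2)| + |(1:ℝ)| := abs_add_le _ _
      _ = σ^2 * |Real.tanh ((σ*z+1)/σ^2) - (σ*z+1)/σ^2| + 1 := by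
          rw [abs_mul, abs_of_nonneg (sq_nonneg σ), abs_one]
      _ ≤ (1+|z|)^3/(3*σ) + 1 := by linarith [hE (z := z) hσ]
      _ ≤ (1+|z|)^3/3 + 1 := by linarith
  have hint : Integrable (fun z : ℝ => (1+|z|)^3/3 + 1) (gaussianReal 0 1) := by
    have hexp : (fun z : ℝ => (1+|z|)^3/3 + 1)
        = fun z : ℝ => (|z|^0 + 3*|z|^1 + 3*|z|^2 + |z|^3)/3 + 1 := by
      funext z
      ring
    rw [hexp]
    exact (((((integrable_abs_pow 0).add ((integrable_abs_pow 1).const_mul 3)).add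
      ((integrable_abs_pow 2).const_mul 3)).add (integrable_abs_pow 3)).div_const 3).add
      (integrable_const 1)
  have hlim : ∀ᵐ z ∂(gaussianReal 0 1), Tendsto
      (fun σ : ℝ => σ^2 * Real.tanh ((σ*z+1)/σ^2) - σ*z) atTop (𝓝 1) :=
    ae_of_all _ hlim1
  have h := tendsto_integral_filter_of_dominated_convergence
    (f := fun _ : ℝ => (1:ℝ)) _ hmeas hbnd hint hlim
  rwa [int_one] at h

lemma key2 : Tendsto (fun σ : ℝ =>
    ∫ z, σ^2 * Real.tanh ((σ*z+1)/σ^2)^2 ∂(gaussianReal 0 1)) atTop (𝓝 1) := by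
  have hmeas : ∀ᶠ σ : ℝ in atTop, AEStronglyMeasurable
      (fun z : ℝ => σ^2 * Real.tanh ((σ*z+1)/σ^2)^2) (gaussianReal 0 1) :=
    Eventually.of_forall fun σ =>
      (continuous_const.mul
        ((my_continuous_tanh.comp (cont_inner σ)).pow 2)).aestronglyMeasurable
  have hbnd : ∀ᶠ σ : ℝ in atTop, ∀ᵐ z ∂(gaussianReal 0 1),
      ‖σ^2 * Real.tanh ((σ*z+1)/σ^2)^2‖ ≤ (1+|z|)^2 := by
    filter_upwards [eventually_ge_atTop (1:ℝ)] with σ hσ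
    refine ae_of_all _ fun z => ?_
    rw [Real.norm_eq_abs, abs_of_nonneg (by positivity)]
    exact hB2 hσ
  have hint : Integrable (fun z : ℝ => (1+|z|)^2) (gaussianReal 0 1) := by
    have hexp : (fun z : ℝ => (1+|z|)^2)
        = fun z : ℝ => |z|^0 + 2*|z|^1 + |z|^2 := by
      funext z
      ring
    rw [hexp]
    exact ((integrable_abs_pow 0).add ((integrable_abs_pow 1).const_mul 2)).add
      (integrable_abs_pow 2)
  have hlim : ∀ᵐ z ∂(gaussianReal 0 1), Tendsto
      (fun σ : ℝ => σ^2 * Real.tanh ((σ*z+1)/σ^2)^2) atTop (𝓝 (z^2)) :=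
    ae_of_all _ hlim2
  have h := tendsto_integral_filter_of_dominated_convergence
    (f := fun z : ℝ => z^2) _ hmeas hbnd hint hlim
  rwa [integral_sq_gauss] at h

set_option maxHeartbeats 1000000 in
lemma transfer1 {σ : ℝ} (hσ : 1 ≤ σ) :
    ∫ z, (σ^2 * Real.tanh ((σ*z+1)/σ^2) - σ*z) ∂(gaussianReal 0 1)
      = σ ^ 2 * ∫ y, Real.tanh (y / σ ^ 2) ∂(gaussianReal 1 ((σ ^ 2).toNNReal)) := by
  have hσ0 : (0:ℝ) < σ := lt_of_lt_of_le one_pos hσ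
  have int1 : Integrable (fun z => σ^2 * Real.tanh ((σ*z+1)/σ^2)) (gaussianReal 0 1) := by
    refine (integrable_const (σ^2)).mono'
      ((continuous_const.mul (my_continuous_tanh.comp (cont_inner σ))).aestronglyMeasurable)
      (ae_of_all _ fun z => ?_)
    rw [Real.norm_eq_abs, abs_mul, abs_of_nonneg (sq_nonneg σ)]
    calc σ^2 * |Real.tanh ((σ*z+1)/σ^2)| ≤ σ^2 * 1 :=
          mul_le_mul_of_nonneg_left (my_abs_tanh_le_one _) (sq_nonneg σ)
      _ = σ^2 := mul_one _
  have int2 : Integrable (fun z : ℝ => σ * z) (gaussianReal 0 1) := by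
    refine ((integrable_abs_pow 1).const_mul |σ|).mono'
      ((continuous_const.mul continuous_id).aestronglyMeasurable)
      (ae_of_all _ fun z => ?_)
    rw [Real.norm_eq_abs, abs_mul, pow_one]
  rw [integral_sub int1 int2, integral_const_mul, integral_const_mul, integral_id_gauss,
    mul_zero, sub_zero,
    integral_transfer σ (fun y => Real.tanh (y/σ^2)) (my_continuous_tanh.comp
      (continuous_id.div_const _))]

set_option maxHeartbeats 1000000 in
lemma transfer2 (σ : ℝ) :
    ∫ z, σ^2 * Real.tanh ((σ*z+1)/σ^2)^2 ∂(gaussianReal 0 1)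
      = σ ^ 2 * ∫ y, (Real.tanh (y / σ ^ 2))^2 ∂(gaussianReal 1 ((σ ^ 2).toNNReal)) := by
  rw [integral_const_mul,
    integral_transfer σ (fun y => (Real.tanh (y/σ^2))^2)
      ((my_continuous_tanh.comp (continuous_id.div_const _)).pow 2)]

end helpers

/-- for `ε = tanh(y/σ²)` with `y ~ N(1,σ²)`, both `E[ε]` and `E[ε²]`
are asymptotic to `σ^{−2}` as `σ → ∞`: `σ²·E[ε] → 1` and `σ²·E[ε²] → 1`. -/
theorem stmt13 :
    Tendsto (fun σ : ℝ =>
        σ ^ 2 * ∫ y, tanh (y / σ ^ 2) ∂(gaussianReal 1 (σ ^ 2).toNNReal))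
      atTop (nhds 1) ∧
    Tendsto (fun σ : ℝ =>
        σ ^ 2 * ∫ y, (tanh (y / σ ^ 2)) ^ 2 ∂(gaussianReal 1 (σ ^ 2).toNNReal))
      atTop (nhds 1) := by
  constructor
  · apply Filter.Tendsto.congr' _ key1
    filter_upwards [eventually_ge_atTop (1:ℝ)] with σ hσ
    exact transfer1 hσ
  · apply Filter.Tendsto.congr' _ key2
    filter_upwards [eventually_ge_atTop (1:ℝ)] with σ hσ
    exact transfer2 σ
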